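/- For scalars (ε_1,...,ε_n) ∈ {0,1}^n, if q_{in} = (∏_{1≤p<i} q_{pi})·(∏_{i<p≤n−1} q_{ip}^{-1}) holds for all 1 ≤ i ≤ n−1, then ∏_{1≤i<j≤n} q_{ij}^{ε_j − ε_i} = 1. -/

import Mathlib

open Finset

/-- **Computation for Proposition C (i).**  For `ε ∈ {0,1}ⁿ`, if
`q_{in} = (∏_{p<i} q_{pi}) · (∏_{i<p≤n−1} q_{ip}⁻¹)` for all `1 ≤ i ≤ n−1` (0-based:
all `i < n-1`, the last index playing the role of `n`), then
`∏_{i<j} q_{ij}^{ε_j − ε_i} = 1`. -/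
theorem stmt12 (K : Type) [Field K] (n : ℕ) (hn : 2 ≤ n)
    (q : Fin n → Fin n → K) (hq : ∀ i j : Fin n, i < j → q i j ≠ 0)
    (ε : Fin n → ℤ) (hε : ∀ i, ε i = 0 ∨ ε i = 1)
    (hcond : ∀ i : Fin n, (i : ℕ) < n - 1 →
        q i ⟨n - 1, by omega⟩ =
          (∏ p ∈ univ.filter (fun p : Fin n => p < i), q p i) *
          (∏ p ∈ univ.filter (fun p : Fin n => i < p ∧ (p : ℕ) < n - 1), (q i p)⁻¹)) :
    (∏ p ∈ univ.filter (fun p : Fin n × Fin n => p.1 < p.2),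
        q p.1 p.2 ^ (ε p.2 - ε p.1)) = 1 := by
  have hmlt : n - 1 < n := by omega
  set m : Fin n := ⟨n - 1, hmlt⟩ with hm_def
  set C : Fin n → K := fun j => ∏ p ∈ univ.filter (fun p : Fin n => p < j), q p j with hC
  set R : Fin n → K := fun i => ∏ p ∈ univ.filter (fun p : Fin n => i < p), q i p with hR
  have hCne : ∀ j, C j ≠ 0 := by
    intro j
    refine Finset.prod_ne_zero_iff.2 (fun p hp => hq p j ?_)
    simpa using hp
  have hRne : ∀ i, R i ≠ 0 := by
    intro i
    refine Finset.prod_ne_zero_iff.2 (fun p hp => hq i p ?_)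
    simpa using hp
  -- The condition rephrased: C i = R i for i < n - 1.
  have key1 : ∀ i : Fin n, (i : ℕ) < n - 1 → C i = R i := by
    intro i hi
    have hfilt : (univ.filter (fun p : Fin n => i < p)) =
        insert m (univ.filter (fun p : Fin n => i < p ∧ (p : ℕ) < n - 1)) := by
      ext p
      simp only [mem_insert, mem_filter, mem_univ, true_and]
      constructor
      · intro h
        by_cases hpm : (p : ℕ) < n - 1
        · exact Or.inr ⟨h, hpm⟩
        · left; apply Fin.ext; have := p.isLt; simp [hm_def]; omega
      · rintro (rfl | ⟨h, _⟩)
        · exact Fin.lt_def.2 (by rw [hm_def]; exact hi)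
        · exact h
    have hmnot : m ∉ univ.filter (fun p : Fin n => i < p ∧ (p : ℕ) < n - 1) := by
      simp [hm_def]
    have hRsplit : R i = q i m * ∏ p ∈ univ.filter (fun p : Fin n => i < p ∧ (p : ℕ) < n - 1), q i p := by
      rw [hR]
      simp only []
      rw [hfilt, Finset.prod_insert hmnot]
    have hc := hcond i hi
    have hqm : q i m = C i * (∏ p ∈ univ.filter (fun p : Fin n => i < p ∧ (p : ℕ) < n - 1), q i p)⁻¹ := by
      rw [← Finset.prod_inv_distrib]
      exact hc
    have hPne : (∏ p ∈ univ.filter (fun p : Fin n => i < p ∧ (p : ℕ) < n - 1), q i p) ≠ 0 := by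
      refine Finset.prod_ne_zero_iff.2 (fun p hp => hq i p ?_)
      exact (Finset.mem_filter.1 hp).2.1
    rw [hRsplit, hqm]
    field_simp
  -- Both ∏ C and ∏ R equal the total product over pairs.
  have doubling : ∀ f : Fin n → Fin n → K,
      (∏ p ∈ univ.filter (fun p : Fin n × Fin n => p.1 < p.2), f p.1 p.2) =
        ∏ i, ∏ j ∈ univ.filter (fun j : Fin n => i < j), f i j := by
    intro f
    rw [Finset.prod_filter]
    rw [Fintype.prod_prod_type]
    exact Finset.prod_congr rfl fun i _ => (Finset.prod_filter _ _).symm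
  have doubling' : ∀ f : Fin n → Fin n → K,
      (∏ p ∈ univ.filter (fun p : Fin n × Fin n => p.1 < p.2), f p.1 p.2) =
        ∏ j, ∏ i ∈ univ.filter (fun i : Fin n => i < j), f i j := by
    intro f
    rw [doubling f]
    calc (∏ i, ∏ j ∈ univ.filter (fun j : Fin n => i < j), f i j)
        = ∏ i, ∏ j, if i < j then f i j else 1 :=
          Finset.prod_congr rfl fun i _ => Finset.prod_filter _ _
      _ = ∏ j, ∏ i, if i < j then f i j else 1 := Finset.prod_comm
      _ = ∏ j, ∏ i ∈ univ.filter (fun i : Fin n => i < j), f i j :=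
          Finset.prod_congr rfl fun j _ => (Finset.prod_filter _ _).symm
  have hRm : R m = 1 := by
    rw [hR]
    simp only []
    rw [Finset.filter_eq_empty_iff.2, Finset.prod_empty]
    intro p _
    have := p.isLt
    simp [hm_def, Fin.lt_def]
    omega
  have hprod_eq : (∏ j, C j) = ∏ i, R i := by
    rw [hC, hR]
    simp only []
    rw [← doubling q, ← doubling' q]
  have hCm : C m = 1 := by
    have h1 : (∏ j, C j) = C m * ∏ j ∈ univ.erase m, C j :=
      (Finset.mul_prod_erase univ C (mem_univ m)).symm
    have h2 : (∏ i, R i) = R m * ∏ i ∈ univ.erase m, R i :=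
      (Finset.mul_prod_erase univ R (mem_univ m)).symm
    have h3 : (∏ j ∈ univ.erase m, C j) = ∏ j ∈ univ.erase m, R j := by
      refine Finset.prod_congr rfl fun j hj => ?_
      have hjm : j ≠ m := (Finset.mem_erase.1 hj).1
      have : (j : ℕ) < n - 1 := by
        have := j.isLt
        have : (j : ℕ) ≠ n - 1 := fun h => hjm (Fin.ext (by simpa [hm_def] using h))
        omega
      exact key1 j this
    have hne : (∏ j ∈ univ.erase m, R j) ≠ 0 :=
      Finset.prod_ne_zero_iff.2 fun j _ => hRne j
    have := hprod_eq
    rw [h1, h2, h3, hRm, one_mul] at this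
    rcases mul_left_eq_self₀.1 this with h | h
    · exact h
    · exact absurd h hne
  have key : ∀ j, C j = R j := by
    intro j
    by_cases hj : (j : ℕ) < n - 1
    · exact key1 j hj
    · have : j = m := by
        apply Fin.ext; have := j.isLt; simp [hm_def]; omega
      rw [this, hCm, hRm]
  -- Main computation.
  have step1 : (∏ p ∈ univ.filter (fun p : Fin n × Fin n => p.1 < p.2),
        q p.1 p.2 ^ (ε p.2 - ε p.1)) =
      (∏ p ∈ univ.filter (fun p : Fin n × Fin n => p.1 < p.2), q p.1 p.2 ^ (ε p.2)) *
      (∏ p ∈ univ.filter (fun p : Fin n × Fin n => p.1 < p.2), q p.1 p.2 ^ (ε p.1))⁻¹ := by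
    rw [← Finset.prod_inv_distrib, ← Finset.prod_mul_distrib]
    refine Finset.prod_congr rfl fun p hp => ?_
    have hne : q p.1 p.2 ≠ 0 := hq p.1 p.2 (by simpa using (Finset.mem_filter.1 hp).2)
    rw [zpow_sub₀ hne, div_eq_mul_inv]
  rw [step1]
  have stepA : (∏ p ∈ univ.filter (fun p : Fin n × Fin n => p.1 < p.2), q p.1 p.2 ^ (ε p.2)) =
      ∏ j, (C j) ^ (ε j) := by
    rw [doubling' (fun i j => q i j ^ (ε j))]
    refine Finset.prod_congr rfl fun j _ => ?_
    rw [hC]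
    simp only []
    rw [← Finset.prod_zpow]
  have stepB : (∏ p ∈ univ.filter (fun p : Fin n × Fin n => p.1 < p.2), q p.1 p.2 ^ (ε p.1)) =
      ∏ i, (R i) ^ (ε i) := by
    rw [doubling (fun i j => q i j ^ (ε i))]
    refine Finset.prod_congr rfl fun i _ => ?_
    rw [hR]
    simp only []
    rw [← Finset.prod_zpow]
  rw [stepA, stepB]
  have : (∏ j, (C j) ^ (ε j)) = ∏ i, (R i) ^ (ε i) :=
    Finset.prod_congr rfl fun j _ => by rw [key j]
  rw [this]
  refine mul_inv_cancel₀ ?_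
  exact Finset.prod_ne_zero_iff.2 fun i _ => zpow_ne_zero _ (hRne i)
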